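/- arXiv:1812.09367 — 2 statements merged into one kernel-verified Lean document; each statement's English description precedes it below -/
import Mathlib

section
/- Let p ≥ 1 be an integer and let δ, ξ > 0 with δξ < p; set γ := pδξ/(p + (p−1)δξ). Let θ₀, τ ∈ ℝ^p and ν > 0 be such that both θ₀ and θ₀ + ντ are unit vectors. Set V₀ := (1 − δξ/p)I_p + δξ·θ₀θ₀ᵀ and V₁ := (1 − δξ/p)I_p + δξ·(θ₀+ντ)(θ₀+ντ)ᵀ. Then for every unit vector u ∈ ℝ^p, the quantities 1 − γ(uᵀθ₀)² and 1 − γ(uᵀ(θ₀+ντ))² are strictly positive, and log[(det V₁)^{−1/2}(uᵀV₁^{−1}u)^{−p/2}] − log[(det V₀)^{−1/2}(uᵀV₀^{−1}u)^{−p/2}] = −(p/2)·log(1 − γν·(2(uᵀθ₀)(uᵀτ) + ν(uᵀτ)²)/(1 − γ(uᵀθ₀)²)). -/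
set_option maxHeartbeats 1000000
open Matrix

lemma myVecMulVec_mulVec {p : ℕ} (w v u : Fin p → ℝ) :
    vecMulVec w v *ᵥ u = (v ⬝ᵥ u) • w := by
  ext i
  simp [mulVec, dotProduct, vecMulVec_apply, Finset.sum_mul, Finset.mul_sum]
  ring_nf

lemma myVecMulVec_mul {p : ℕ} (w v w' v' : Fin p → ℝ) :
    vecMulVec w v * vecMulVec w' v' = (v ⬝ᵥ w') • vecMulVec w v' := by
  ext i j
  simp [mul_apply, vecMulVec_apply, dotProduct, Finset.sum_mul, Finset.mul_sum]
  exact Finset.sum_congr rfl fun k _ => by ring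

lemma mySpike_inv {p : ℕ} (a b : ℝ) (ha : a ≠ 0) (hab : a + b ≠ 0) (θ : Fin p → ℝ)
    (hθ : θ ⬝ᵥ θ = 1) :
    (a • (1 : Matrix (Fin p) (Fin p) ℝ) + b • vecMulVec θ θ)⁻¹
      = (1/a) • (1 : Matrix (Fin p) (Fin p) ℝ) - (b/(a*(a+b))) • vecMulVec θ θ := by
  apply inv_eq_right_inv
  rw [Matrix.add_mul, Matrix.mul_sub, Matrix.mul_sub]
  simp only [Matrix.smul_mul, Matrix.mul_smul, Matrix.one_mul, Matrix.mul_one,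
    myVecMulVec_mul, hθ, one_smul, smul_smul]
  match_scalars <;> field_simp; ring

lemma mySpike_det {p : ℕ} (a b : ℝ) (ha : a ≠ 0) (θ : Fin p → ℝ) (hθ : θ ⬝ᵥ θ = 1) :
    (a • (1 : Matrix (Fin p) (Fin p) ℝ) + b • vecMulVec θ θ).det = a ^ p * (1 + b / a) := by
  have h1 : a • (1 : Matrix (Fin p) (Fin p) ℝ) + b • vecMulVec θ θ
      = a • ((1 : Matrix (Fin p) (Fin p) ℝ) + vecMulVec ((b/a) • θ) θ) := by
    rw [smul_add]
    congr 1
    have : vecMulVec ((b/a) • θ) θ = (b/a) • vecMulVec θ θ := by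
      ext i j; simp [vecMulVec_apply]; ring
    rw [this, smul_smul]
    congr 1
    field_simp
  rw [h1, det_smul, vecMulVec_eq Unit, det_one_add_replicateCol_mul_replicateRow]
  simp [dotProduct_smul, hθ]

/-- Single-observation log-likelihood-ratio identity for angular Gaussian
densities with single-spike shapes `V₁` versus `V₀` (equation (C.4) of the paper): with
`γ := pδξ/(p + (p−1)δξ)`, for every unit vector `u` the quantities `1 − γ(uᵀθ₀)²` and
`1 − γ(uᵀ(θ₀+ντ))²` are strictly positive and
`log[(det V₁)^{−1/2}(uᵀV₁⁻¹u)^{−p/2}] − log[(det V₀)^{−1/2}(uᵀV₀⁻¹u)^{−p/2}]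
  = −(p/2) log(1 − γν (2(uᵀθ₀)(uᵀτ) + ν(uᵀτ)²)/(1 − γ(uᵀθ₀)²))`. -/
theorem stmt9 (p : ℕ) (hp : 1 ≤ p) (δ ξ : ℝ) (hδ : 0 < δ) (hξ : 0 < ξ) (hδξ : δ * ξ < p)
    (θ₀ τ : Fin p → ℝ) (ν : ℝ) (hν : 0 < ν)
    (hθ₀ : θ₀ ⬝ᵥ θ₀ = 1) (hθ₁ : (θ₀ + ν • τ) ⬝ᵥ (θ₀ + ν • τ) = 1) :
    let γ : ℝ := (p : ℝ) * δ * ξ / ((p : ℝ) + ((p : ℝ) - 1) * δ * ξ);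
    let V₀ : Matrix (Fin p) (Fin p) ℝ :=
      (1 - δ * ξ / p) • (1 : Matrix (Fin p) (Fin p) ℝ) + (δ * ξ) • vecMulVec θ₀ θ₀;
    let V₁ : Matrix (Fin p) (Fin p) ℝ :=
      (1 - δ * ξ / p) • (1 : Matrix (Fin p) (Fin p) ℝ) +
        (δ * ξ) • vecMulVec (θ₀ + ν • τ) (θ₀ + ν • τ);
    ∀ u : Fin p → ℝ, u ⬝ᵥ u = 1 →
      0 < 1 - γ * (u ⬝ᵥ θ₀) ^ 2 ∧
      0 < 1 - γ * (u ⬝ᵥ (θ₀ + ν • τ)) ^ 2 ∧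
      Real.log (V₁.det ^ (-(1 : ℝ) / 2) * (u ⬝ᵥ (V₁⁻¹ *ᵥ u)) ^ (-(p : ℝ) / 2)) -
          Real.log (V₀.det ^ (-(1 : ℝ) / 2) * (u ⬝ᵥ (V₀⁻¹ *ᵥ u)) ^ (-(p : ℝ) / 2)) =
        -((p : ℝ) / 2) *
          Real.log (1 - γ * ν * (2 * (u ⬝ᵥ θ₀) * (u ⬝ᵥ τ) + ν * (u ⬝ᵥ τ) ^ 2) /
            (1 - γ * (u ⬝ᵥ θ₀) ^ 2)) := by
  intro γ V₀ V₁ u hu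
  have hγdef : γ = (p : ℝ) * δ * ξ / ((p : ℝ) + ((p : ℝ) - 1) * δ * ξ) := rfl
  set a : ℝ := 1 - δ * ξ / p with ha_def
  set b : ℝ := δ * ξ with hb_def
  have hV₀def : V₀ = a • (1 : Matrix (Fin p) (Fin p) ℝ) + b • vecMulVec θ₀ θ₀ := rfl
  have hV₁def : V₁ = a • (1 : Matrix (Fin p) (Fin p) ℝ)
      + b • vecMulVec (θ₀ + ν • τ) (θ₀ + ν • τ) := rfl
  have hp0 : (0:ℝ) < p := by exact_mod_cast Nat.pos_of_ne_zero (by omega)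
  have hp1 : (1:ℝ) ≤ p := by exact_mod_cast hp
  have hb : 0 < b := mul_pos hδ hξ
  have ha : 0 < a := by
    rw [ha_def]
    have : δ * ξ / p < 1 := (div_lt_one hp0).mpr hδξ
    linarith
  have hab : 0 < a + b := by linarith
  have hγeq : γ = b / (a + b) := by
    rw [hγdef, ha_def, hb_def]
    rw [div_eq_div_iff (by nlinarith) (by positivity)]
    field_simp
    ring
  have hγ0 : 0 ≤ γ := by rw [hγeq]; positivity
  have hγ1 : γ < 1 := by rw [hγeq]; rw [div_lt_one hab]; linarith
  -- Cauchy-Schwarz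
  have husq : ∑ i, u i ^ 2 = 1 := by simpa [dotProduct, sq] using hu
  have cs : ∀ w : Fin p → ℝ, w ⬝ᵥ w = 1 → (u ⬝ᵥ w) ^ 2 ≤ 1 := by
    intro w hw
    have hwsq : ∑ i, w i ^ 2 = 1 := by simpa [dotProduct, sq] using hw
    have h := Finset.sum_mul_sq_le_sq_mul_sq Finset.univ u w
    rw [husq, hwsq] at h
    simpa [dotProduct] using h
  set t : ℝ := u ⬝ᵥ θ₀ with ht_def
  set s : ℝ := u ⬝ᵥ τ with hs_def
  set t1 : ℝ := u ⬝ᵥ (θ₀ + ν • τ) with ht1_def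
  have ht1 : t1 = t + ν * s := by
    rw [ht1_def, dotProduct_add, dotProduct_smul, ht_def, hs_def]; rfl
  have hpos0 : 0 < 1 - γ * t ^ 2 := by nlinarith [cs θ₀ hθ₀]
  have hpos1 : 0 < 1 - γ * t1 ^ 2 := by nlinarith [cs _ hθ₁]
  refine ⟨hpos0, hpos1, ?_⟩
  -- quadratic forms
  have hquad : ∀ w : Fin p → ℝ, w ⬝ᵥ w = 1 →
      u ⬝ᵥ ((a • (1 : Matrix (Fin p) (Fin p) ℝ) + b • vecMulVec w w)⁻¹ *ᵥ u)
        = (1/a) * (1 - γ * (u ⬝ᵥ w) ^ 2) := by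
    intro w hw
    rw [mySpike_inv a b ha.ne' hab.ne' w hw, Matrix.sub_mulVec, smul_mulVec,
      smul_mulVec, one_mulVec, myVecMulVec_mulVec, dotProduct_sub, dotProduct_smul,
      dotProduct_smul, dotProduct_smul, hu, dotProduct_comm w u]
    rw [hγeq]
    simp only [smul_eq_mul]
    field_simp
  have hA0 := hquad θ₀ hθ₀
  have hA1 := hquad _ hθ₁
  rw [← hV₀def] at hA0
  rw [← hV₁def] at hA1
  rw [← ht_def] at hA0
  rw [← ht1_def] at hA1
  have hdet0 : V₀.det = a ^ p * (1 + b / a) := by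
    rw [hV₀def]; exact mySpike_det a b ha.ne' θ₀ hθ₀
  have hdet1 : V₁.det = a ^ p * (1 + b / a) := by
    rw [hV₁def]; exact mySpike_det a b ha.ne' _ hθ₁
  have hd : (0:ℝ) < a ^ p * (1 + b / a) := by positivity
  have hA0pos : 0 < u ⬝ᵥ (V₀⁻¹ *ᵥ u) := by rw [hA0]; positivity
  have hA1pos : 0 < u ⬝ᵥ (V₁⁻¹ *ᵥ u) := by rw [hA1]; positivity
  set X : ℝ := 1 - γ * ν * (2 * t * s + ν * s ^ 2) / (1 - γ * t ^ 2) with hX_def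
  have hXmul : (1/a) * (1 - γ * t1 ^ 2) = ((1/a) * (1 - γ * t ^ 2)) * X := by
    rw [hX_def, ht1]
    field_simp
    ring
  have hXpos : 0 < X := by
    have h1 : 0 < ((1/a) * (1 - γ * t ^ 2)) * X := by rw [← hXmul]; positivity
    have h2 : 0 < (1/a) * (1 - γ * t ^ 2) := by positivity
    have h3 : X = (1 / a * (1 - γ * t ^ 2) * X) / (1 / a * (1 - γ * t ^ 2)) := by
      field_simp
    rw [h3]
    exact div_pos h1 h2
  rw [hdet0, hdet1]
  rw [Real.log_mul (by positivity) (by positivity)]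
  rw [Real.log_mul (by positivity) (by positivity)]
  rw [Real.log_rpow hd]
  rw [Real.log_rpow hA0pos, Real.log_rpow hA1pos]
  rw [hA0, hA1, hXmul]
  rw [Real.log_mul (by positivity) hXpos.ne']
  ring
end

section
/- Let p ≥ 1 be an integer, let ξ > 0, and let θ₀, τ ∈ ℝ^p with ‖θ₀‖ = 1 and θ₀ᵀτ = −‖τ‖²/(2ξ). Set M := (p/(p+2))(I_{p²} + K_p + J_p) − J_p and ℓ := (θ₀ ⊗ τ) + (1/(2ξ))(τ ⊗ τ). Then ℓᵀMℓ = (p/(p+2))·(‖τ‖² − ‖τ‖⁴/(4ξ²)). -/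
open Matrix
open scoped Kronecker

/-- Column-stacking vectorization of a `p×p` matrix, as a vector indexed by
`Fin p × Fin p` (the entry at `(j, i)` is `M i j`). -/
def vecCol {p : ℕ} (M : Matrix (Fin p) (Fin p) ℝ) : Fin p × Fin p → ℝ :=
  fun x => M x.2 x.1

/-- The `p²×p²` commutation matrix `K_p := Σ_{i,j} (e_i e_jᵀ) ⊗ (e_j e_iᵀ)`. -/
def commK (p : ℕ) : Matrix (Fin p × Fin p) (Fin p × Fin p) ℝ :=
  ∑ i : Fin p, ∑ j : Fin p,
    (Matrix.single i j (1 : ℝ)) ⊗ₖ (Matrix.single j i (1 : ℝ))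

/-- The `p²×p²` matrix `J_p := (vec I_p)(vec I_p)ᵀ`. -/
def matJ (p : ℕ) : Matrix (Fin p × Fin p) (Fin p × Fin p) ℝ :=
  Matrix.vecMulVec (vecCol (1 : Matrix (Fin p) (Fin p) ℝ))
    (vecCol (1 : Matrix (Fin p) (Fin p) ℝ))

/-- Kronecker product of two vectors of `ℝ^p`, as a vector of `ℝ^{p²}`: the entry of
`a ⊗ b` at `(j, i)` is `a_j b_i`, so that `(a ⊗ b)ᵀ vec(Υ) = bᵀΥa`. -/
def kronVec {p : ℕ} (a b : Fin p → ℝ) : Fin p × Fin p → ℝ :=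
  fun x => a x.1 * b x.2

lemma dot_kron {p : ℕ} (a b c d : Fin p → ℝ) :
    kronVec a b ⬝ᵥ kronVec c d = (a ⬝ᵥ c) * (b ⬝ᵥ d) := by
  simp only [kronVec, dotProduct, Fintype.sum_prod_type, Finset.sum_mul_sum]
  apply Finset.sum_congr rfl; intros; apply Finset.sum_congr rfl; intros; ring

lemma commK_mulVec {p : ℕ} (a b : Fin p → ℝ) :
    commK p *ᵥ kronVec a b = kronVec b a := by
  ext ⟨r, s⟩
  simp [commK, mulVec, dotProduct, kronVec, Matrix.sum_apply, single,
    Fintype.sum_prod_type, ite_and, mul_comm]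

lemma vecCol_one_dot {p : ℕ} (a b : Fin p → ℝ) :
    vecCol (1 : Matrix (Fin p) (Fin p) ℝ) ⬝ᵥ kronVec a b = a ⬝ᵥ b := by
  simp [vecCol, kronVec, dotProduct, Fintype.sum_prod_type, Matrix.one_apply, eq_comm]

/-- Let `θ₀ ∈ ℝ^p` be a unit vector and `τ ∈ ℝ^p` with
`θ₀ᵀτ = −‖τ‖²/(2ξ)` (`ξ > 0`). With `M := (p/(p+2))(I_{p²} + K_p + J_p) − J_p` and
`ℓ := (θ₀ ⊗ τ) + (1/(2ξ))(τ ⊗ τ)`, one has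
`ℓᵀMℓ = (p/(p+2))(‖τ‖² − ‖τ‖⁴/(4ξ²))`. -/
theorem stmt18 (p : ℕ) (hp : 1 ≤ p) (ξ : ℝ) (hξ : 0 < ξ)
    (θ₀ τ : Fin p → ℝ) (hθ₀ : θ₀ ⬝ᵥ θ₀ = 1)
    (hτ : θ₀ ⬝ᵥ τ = -(τ ⬝ᵥ τ) / (2 * ξ)) :
    let M : Matrix (Fin p × Fin p) (Fin p × Fin p) ℝ :=
      ((p : ℝ) / ((p : ℝ) + 2)) •
          ((1 : Matrix (Fin p × Fin p) (Fin p × Fin p) ℝ) + commK p + matJ p) -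
        matJ p;
    let ℓ : Fin p × Fin p → ℝ := kronVec θ₀ τ + (1 / (2 * ξ)) • kronVec τ τ;
    ℓ ⬝ᵥ (M *ᵥ ℓ) =
      ((p : ℝ) / ((p : ℝ) + 2)) * ((τ ⬝ᵥ τ) - (τ ⬝ᵥ τ) ^ 2 / (4 * ξ ^ 2)) := by
  intro M ℓ
  have h2ξ : (2 * ξ) ≠ 0 := by positivity
  set c : ℝ := 1 / (2 * ξ) with hc'
  set s : ℝ := τ ⬝ᵥ τ with hs
  have ht : θ₀ ⬝ᵥ τ = -(c * s) := by rw [hτ, hc']; field_simp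
  have ht' : τ ⬝ᵥ θ₀ = -(c * s) := by rw [dotProduct_comm, ht]
  have h0 : vecCol (1 : Matrix (Fin p) (Fin p) ℝ) ⬝ᵥ ℓ = 0 := by
    simp [ℓ, dotProduct_add, dotProduct_smul, vecCol_one_dot, ht, smul_eq_mul]
    rw [← hs, hc']; ring
  have hJ : matJ p *ᵥ ℓ = 0 := by
    ext x
    simp only [dotProduct] at h0
    simp only [matJ, mulVec, dotProduct, vecMulVec_apply, Pi.zero_apply, mul_assoc,
      ← Finset.mul_sum, h0, mul_zero]
  have hK : commK p *ᵥ ℓ = kronVec τ θ₀ + c • kronVec τ τ := by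
    simp only [ℓ, mulVec_add, mulVec_smul, commK_mulVec, ← hc']
  have hll : ℓ ⬝ᵥ ℓ = s - c ^ 2 * s ^ 2 := by
    simp only [ℓ, dotProduct_add, add_dotProduct, dotProduct_smul, smul_dotProduct,
      smul_eq_mul, dot_kron, ht, ht', hθ₀, ← hs]
    ring
  have hlK : ℓ ⬝ᵥ (commK p *ᵥ ℓ) = 0 := by
    simp only [hK, ℓ, dotProduct_add, add_dotProduct, dotProduct_smul, smul_dotProduct,
      smul_eq_mul, dot_kron, ht, ht', hθ₀, ← hs]
    ring
  have key : ℓ ⬝ᵥ (M *ᵥ ℓ) = ((p : ℝ) / ((p : ℝ) + 2)) * (ℓ ⬝ᵥ ℓ + ℓ ⬝ᵥ (commK p *ᵥ ℓ)) := by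
    simp only [M, sub_mulVec, smul_mulVec, add_mulVec, one_mulVec, hJ,
      dotProduct_sub, dotProduct_smul, dotProduct_add, dotProduct_zero, smul_eq_mul,
      add_zero, sub_zero, mul_add]
  rw [key, hll, hlK, add_zero]
  have hcsq : c ^ 2 = 1 / (4 * ξ ^ 2) := by rw [hc']; field_simp; ring
  rw [hcsq]
  ring
end
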